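/- For every prime power q, F(I_{2,q}) ≤ ζ(3) + (1/2)·Li₂(1/q), where Li₂(x) = ∑_{k=1}^∞ x^k/k². -/

import Mathlib

open Polynomial

/-- The number of irreducible factors of a polynomial, counted with multiplicity. -/
noncomputable def bigOmega {F : Type*} [Field F] (f : F[X]) : ℕ :=
  (UniqueFactorizationMonoid.factors f).card

/-- The dilogarithm `Li₂(x) = ∑_{k≥1} x^k / k²`. -/
noncomputable def dilog (x : ℝ) : ℝ := ∑' k : ℕ, x ^ (k + 1) / (k + 1) ^ 2

open Filter Finset
open scoped ENNReal NNReal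

set_option linter.unusedSectionVars false

namespace Stmt18


lemma tendsto_null (C : ℝ) : Tendsto (fun n : ℕ => 1/((n:ℝ)+C)) atTop (nhds 0) := by
  simp only [one_div]
  exact (tendsto_atTop_add_const_right atTop C tendsto_natCast_atTop_atTop).inv_tendsto_atTop

noncomputable def Hr (c : ℕ) : ℝ := ∑ i ∈ Finset.range c, 1/((i:ℝ)+1)

lemma telR0 (a : ℕ) :
    HasSum (fun k:ℕ => 1/((((k:ℝ)+a+1))*(((k:ℝ)+a+2)))) (1/((a:ℝ)+1)) := by
  rw [hasSum_iff_tendsto_nat_of_nonneg (by intro i; positivity)]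
  have hps : ∀ M : ℕ, ∑ k ∈ range M, 1/((((k:ℝ)+a+1))*(((k:ℝ)+a+2)))
      = 1/((a:ℝ)+1) - 1/((M:ℝ)+a+1) := by
    intro M
    have key : ∑ k ∈ range M, 1/((((k:ℝ)+a+1))*(((k:ℝ)+a+2)))
        = ∑ k ∈ range M, ((fun i : ℕ => 1/((i:ℝ)+a+1)) k - (fun i : ℕ => 1/((i:ℝ)+a+1)) (k+1)) := by
      apply Finset.sum_congr rfl
      intro k _
      simp only []
      push_cast
      have h1 : ((k:ℝ)+(a:ℝ)+1) ≠ 0 := by positivity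
      have h2 : ((k:ℝ)+(a:ℝ)+1)+1 ≠ 0 := by positivity
      rw [show (k:ℝ)+1+(a:ℝ)+1 = ((k:ℝ)+(a:ℝ)+1)+1 by ring,
          show (k:ℝ)+(a:ℝ)+2 = ((k:ℝ)+(a:ℝ)+1)+1 by ring]
      rw [div_sub_div _ _ h1 h2]
      rw [div_eq_div_iff (by positivity) (by positivity)]
      ring
    rw [key, Finset.sum_range_sub' (fun i : ℕ => 1/((i:ℝ)+a+1)) M]
    norm_num
  simp only [hps]
  have h0 : Tendsto (fun M : ℕ => 1/((M:ℝ)+a+1)) atTop (nhds 0) := by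
    have := tendsto_null ((a:ℝ)+1)
    convert this using 2 with M
    ring
  have := (tendsto_const_nhds (x := 1/((a:ℝ)+1)) (f := atTop (α := ℕ))).sub h0
  simpa using this

lemma telR (c : ℕ) :
    HasSum (fun m:ℕ => 1/((((m:ℝ)+1))*(((m:ℝ)+c+2)))) (Hr (c+1)/((c:ℝ)+1)) := by
  rw [hasSum_iff_tendsto_nat_of_nonneg (by intro i; positivity)]
  have hps : ∀ M : ℕ, ∑ m ∈ range M, 1/((((m:ℝ)+1))*(((m:ℝ)+c+2)))
      = (1/((c:ℝ)+1)) * (Hr (c+1) - ∑ i ∈ range (c+1), 1/((M:ℝ)+i+1)) := by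
    intro M
    induction M with
    | zero =>
      simp only [range_zero, sum_empty, Nat.cast_zero]
      rw [show (Hr (c+1) - ∑ i ∈ range (c+1), 1/((0:ℝ)+i+1)) = 0 by
        rw [sub_eq_zero, Hr]; apply Finset.sum_congr rfl; intro i _; ring_nf]
      ring
    | succ M ih =>
      rw [Finset.sum_range_succ, ih]
      have hdiff : (∑ i ∈ range (c+1), 1/((M:ℝ)+i+1)) - (∑ i ∈ range (c+1), 1/(((M+1:ℕ):ℝ)+i+1))
          = 1/((M:ℝ)+1) - 1/((M:ℝ)+c+2) := by
        rw [← Finset.sum_sub_distrib]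
        have := Finset.sum_range_sub' (fun i : ℕ => 1/((M:ℝ)+i+1)) (c+1)
        rw [show (∑ i ∈ range (c+1), (1/((M:ℝ)+i+1) - 1/(((M+1:ℕ):ℝ)+i+1)))
            = ∑ i ∈ range (c+1), ((fun i : ℕ => 1/((M:ℝ)+i+1)) i - (fun i : ℕ => 1/((M:ℝ)+i+1)) (i+1)) by
          apply Finset.sum_congr rfl; intro i _; push_cast; ring_nf, this]
        push_cast; ring_nf
      have h1 : ((M:ℝ)+1) ≠ 0 := by positivity
      have h2 : ((M:ℝ)+c+2) ≠ 0 := by positivity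
      have h3 : ((c:ℝ)+1) ≠ 0 := by positivity
      have key : (1/((c:ℝ)+1)) * (1/((M:ℝ)+1) - 1/((M:ℝ)+c+2)) = 1/((((M:ℝ)+1))*(((M:ℝ)+c+2))) := by
        field_simp
        ring
      calc (1/((c:ℝ)+1)) * (Hr (c+1) - ∑ i ∈ range (c+1), 1/((M:ℝ)+i+1)) + 1/((((M:ℝ)+1))*(((M:ℝ)+c+2)))
          = (1/((c:ℝ)+1)) * (Hr (c+1) - ∑ i ∈ range (c+1), 1/((M:ℝ)+i+1))
            + (1/((c:ℝ)+1)) * ((∑ i ∈ range (c+1), 1/((M:ℝ)+i+1)) - (∑ i ∈ range (c+1), 1/(((M+1:ℕ):ℝ)+i+1))) := by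
            rw [hdiff, key]
        _ = (1/((c:ℝ)+1)) * (Hr (c+1) - ∑ i ∈ range (c+1), 1/(((M+1:ℕ):ℝ)+i+1)) := by ring
  simp only [hps]
  have h0 : Tendsto (fun M : ℕ => ∑ i ∈ range (c+1), 1/((M:ℝ)+i+1)) atTop (nhds 0) := by
    have : Tendsto (fun M : ℕ => ∑ i ∈ range (c+1), 1/((M:ℝ)+i+1)) atTop
        (nhds (∑ i ∈ range (c+1), (0:ℝ))) := by
      apply tendsto_finset_sum
      intro i _
      have := tendsto_null ((i:ℝ)+1)
      convert this using 2 with M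
      ring
    simpa using this
  have := (tendsto_const_nhds (x := Hr (c+1)) (f := atTop (α := ℕ))).sub h0 |>.const_mul (1/((c:ℝ)+1))
  simpa [mul_comm, div_eq_mul_inv, mul_sub] using this



lemma Hr_nonneg (c : ℕ) : 0 ≤ Hr c := Finset.sum_nonneg (fun i _ => by positivity)

lemma ofRinv (N : ℕ) (h : 0 < N) : ((N:ℕ):ℝ≥0∞)⁻¹ = ENNReal.ofReal (1/(N:ℝ)) := by
  rw [one_div, ENNReal.ofReal_inv_of_pos (by positivity), ENNReal.ofReal_natCast]

lemma tsum_inv_eq {ι : Type*} (f : ι → ℕ) (hf : ∀ i, 0 < f i) {r : ℝ}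
    (h : HasSum (fun i => 1/(f i : ℝ)) r) :
    ∑' i, ((f i : ℕ):ℝ≥0∞)⁻¹ = ENNReal.ofReal r := by
  rw [show ∑' i, ((f i : ℕ):ℝ≥0∞)⁻¹ = ∑' i, ENNReal.ofReal (1/(f i : ℝ)) from
    tsum_congr (fun i => ofRinv _ (hf i))]
  rw [← ENNReal.ofReal_tsum_of_nonneg (fun i => by positivity) h.summable, h.tsum_eq]

noncomputable def gE (p : ℕ×ℕ) : ℝ≥0∞ := (((p.1+1)*(p.2+1)*(p.1+p.2+2) : ℕ) : ℝ≥0∞)⁻¹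
noncomputable def uE (m k : ℕ) : ℝ≥0∞ := (((m+1)*((m+k+2))^2 : ℕ) : ℝ≥0∞)⁻¹
noncomputable def z3E : ℝ≥0∞ := ∑' n:ℕ, ENNReal.ofReal (1/((n:ℝ)+1)^3)

lemma rowg (k : ℕ) : ∑' m : ℕ, gE (m,k) = ENNReal.ofReal (Hr (k+1)/(((k:ℝ)+1)^2)) := by
  apply tsum_inv_eq (fun m => (m+1)*(k+1)*(m+k+2)) (fun m => by positivity)
  have h := (telR k).mul_left (1/((k:ℝ)+1))
  have hfun : (fun m : ℕ => 1/((k:ℝ)+1) * (1/((((m:ℝ)+1))*(((m:ℝ)+k+2)))))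
      = fun m : ℕ => 1/((((m+1)*(k+1)*(m+k+2) : ℕ)):ℝ) := by
    funext m; push_cast; rw [div_mul_div_comm]; ring_nf
  have hval : 1/((k:ℝ)+1) * (Hr (k+1)/((k:ℝ)+1)) = Hr (k+1)/(((k:ℝ)+1)^2) := by
    rw [div_mul_div_comm, one_mul, ← sq]
  rwa [hfun, hval] at h

lemma SgE_eq : ∑' p : ℕ×ℕ, gE p = ∑' k : ℕ, ENNReal.ofReal (Hr (k+1)/(((k:ℝ)+1)^2)) := by
  have : ∑' p : ℕ×ℕ, gE p = ∑' (m : ℕ) (k : ℕ), gE (m, k) :=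
    ENNReal.tsum_prod (f := fun m k => gE (m, k))
  rw [this, ENNReal.tsum_comm]
  exact tsum_congr rowg

lemma gE_split (m k : ℕ) : gE (m,k) = uE m k + uE k m := by
  unfold gE uE
  rw [ofRinv _ (by positivity), ofRinv _ (by positivity), ofRinv _ (by positivity),
    ← ENNReal.ofReal_add (by positivity) (by positivity)]
  congr 1
  push_cast
  rw [div_add_div _ _ (by positivity) (by positivity), div_eq_div_iff (by positivity) (by positivity)]
  ring

lemma SuE_eq : ∑' p : ℕ×ℕ, uE p.1 p.2 = ∑' n : ℕ, ENNReal.ofReal (Hr (n+1)/(((n:ℝ)+2)^2)) := by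
  classical
  set v : ℕ×ℕ → ℝ≥0∞ := fun p => if p.2 ≤ p.1 then (((p.2+1)*((p.1+2))^2 : ℕ) : ℝ≥0∞)⁻¹ else 0 with hv
  have hinj : Function.Injective (fun p : ℕ×ℕ => (p.1 + p.2, p.1)) := by
    intro a b h
    simp only [Prod.mk.injEq] at h
    obtain ⟨h1, h2⟩ := h
    exact Prod.ext h2 (by omega)
  have hsupp : Function.support v ⊆ Set.range (fun p : ℕ×ℕ => (p.1 + p.2, p.1)) := by
    rintro ⟨a, b⟩ hp
    rw [Function.mem_support, hv] at hp
    by_cases h : b ≤ a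
    · exact ⟨(b, a - b), by simp; omega⟩
    · simp [h] at hp
  have key : ∑' p : ℕ×ℕ, uE p.1 p.2 = ∑' p : ℕ×ℕ, v p := by
    rw [← hinj.tsum_eq hsupp]
    apply tsum_congr
    intro p
    simp only [hv, uE]
    rw [if_pos (Nat.le_add_right p.1 p.2)]
  rw [key, ENNReal.tsum_prod (f := fun s m => v (s, m))]
  apply tsum_congr
  intro s
  have hsum : ∑' m : ℕ, v (s, m) = ∑ m ∈ range (s+1), (((m+1)*((s+2))^2 : ℕ) : ℝ≥0∞)⁻¹ := by
    rw [tsum_eq_sum (s := range (s+1))]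
    · apply Finset.sum_congr rfl
      intro m hm
      rw [hv]
      simp only []
      rw [if_pos (by simp at hm; omega)]
    · intro m hm
      rw [hv]
      simp only []
      rw [if_neg (by simp at hm; omega)]
  rw [hsum]
  have : ∀ m ∈ range (s+1), (((m+1)*((s+2))^2 : ℕ) : ℝ≥0∞)⁻¹
      = ENNReal.ofReal (1/(((m+1)*((s+2))^2 : ℕ) : ℝ)) := fun m _ => ofRinv _ (by positivity)
  rw [Finset.sum_congr rfl this, ← ENNReal.ofReal_sum_of_nonneg (fun m _ => by positivity)]
  congr 1
  rw [eq_comm, Hr, Finset.sum_div, Finset.sum_congr rfl]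
  intro m _
  push_cast
  rw [div_div]

lemma SuE_swap : ∑' p : ℕ×ℕ, uE p.2 p.1 = ∑' p : ℕ×ℕ, uE p.1 p.2 :=
  ((Equiv.prodComm ℕ ℕ).tsum_eq (fun p : ℕ×ℕ => uE p.1 p.2)).symm ▸ rfl

lemma SuE_ne_top : ∑' p : ℕ×ℕ, uE p.1 p.2 ≠ ⊤ := by
  have hbound : ∀ m : ℕ, ∑' k : ℕ, uE m k ≤ ENNReal.ofReal (1/((m:ℝ)+1)^2) := by
    intro m
    have h1 : ∀ k : ℕ, uE m k ≤ (((m+1):ℕ):ℝ≥0∞)⁻¹ * ((((m+k+1)*(m+k+2)):ℕ):ℝ≥0∞)⁻¹ := by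
      intro k
      unfold uE
      rw [Nat.cast_mul, ENNReal.mul_inv (Or.inl (by positivity)) (Or.inl (by simp))]
      apply mul_le_mul_right
      apply ENNReal.inv_le_inv.2
      apply Nat.cast_le.2
      rw [pow_two]
      exact Nat.mul_le_mul (by omega) (le_refl _)
    calc ∑' k : ℕ, uE m k ≤ ∑' k : ℕ, (((m+1):ℕ):ℝ≥0∞)⁻¹ * ((((m+k+1)*(m+k+2)):ℕ):ℝ≥0∞)⁻¹ :=
          ENNReal.tsum_le_tsum h1
      _ = (((m+1):ℕ):ℝ≥0∞)⁻¹ * ∑' k : ℕ, ((((m+k+1)*(m+k+2)):ℕ):ℝ≥0∞)⁻¹ := ENNReal.tsum_mul_left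
      _ = ENNReal.ofReal (1/((m:ℝ)+1)) * ENNReal.ofReal (1/((m:ℝ)+1)) := by
          rw [ofRinv _ (by positivity)]
          congr 1
          · congr 1; push_cast; ring
          · apply tsum_inv_eq _ (fun k => by positivity)
            have h := telR0 m
            have hfun : (fun k:ℕ => 1/((((k:ℝ)+m+1))*(((k:ℝ)+m+2))))
                = fun k:ℕ => 1/((((m+k+1)*(m+k+2)):ℕ):ℝ) := by
              funext k; push_cast; ring_nf
            rwa [hfun] at h
      _ = ENNReal.ofReal (1/((m:ℝ)+1)^2) := by
          rw [← ENNReal.ofReal_mul (by positivity)]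
          congr 1
          rw [div_mul_div_comm]
          ring_nf
  have hsq : Summable (fun m : ℕ => 1/((m:ℝ)+1)^2) := by
    have h0 : Summable (fun n : ℕ => 1/((n:ℝ))^2) := Real.summable_one_div_nat_pow.2 (by norm_num)
    have h1 := (summable_nat_add_iff 1).2 h0
    apply h1.congr
    intro n
    push_cast
    ring_nf
  have hle : ∑' p : ℕ×ℕ, uE p.1 p.2 ≤ ENNReal.ofReal (∑' m : ℕ, 1/((m:ℝ)+1)^2) := by
    rw [ENNReal.tsum_prod (f := fun m k => uE m k),
      ENNReal.ofReal_tsum_of_nonneg (fun m => by positivity) hsq]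
    exact ENNReal.tsum_le_tsum hbound
  exact ne_top_of_le_ne_top ENNReal.ofReal_ne_top hle

noncomputable def Sig2E : ℝ≥0∞ := ∑' n : ℕ, ENNReal.ofReal (Hr (n+1)/(((n:ℝ)+2)^2))

lemma Sig1_eq : ∑' k : ℕ, ENNReal.ofReal (Hr (k+1)/(((k:ℝ)+1)^2)) = Sig2E + z3E := by
  have hshift := tsum_eq_zero_add'
    (f := fun k : ℕ => ENNReal.ofReal (Hr (k+1)/(((k:ℝ)+1)^2))) ENNReal.summable
  have hz3 := tsum_eq_zero_add'
    (f := fun n : ℕ => ENNReal.ofReal (1/((n:ℝ)+1)^3)) ENNReal.summable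
  rw [hshift]
  have hterm : ∀ n : ℕ, ENNReal.ofReal (Hr (n+1+1)/((((n+1:ℕ)):ℝ)+1)^2)
      = ENNReal.ofReal (Hr (n+1)/(((n:ℝ)+2)^2)) + ENNReal.ofReal (1/(((n+1:ℕ):ℝ)+1)^3) := by
    intro n
    rw [← ENNReal.ofReal_add (div_nonneg (Hr_nonneg _) (by positivity)) (by positivity)]
    congr 1
    have hH : Hr (n+1+1) = Hr (n+1) + 1/((n:ℝ)+2) := by
      simp only [Hr, Finset.sum_range_succ]
      push_cast
      rw [show (n:ℝ)+1+1 = (n:ℝ)+2 from by ring]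
    push_cast
    rw [show (n:ℝ)+1+1 = (n:ℝ)+2 from by ring, hH, add_div]
    congr 1
    rw [div_div]
    congr 1
    ring
  rw [tsum_congr hterm, ENNReal.tsum_add]
  have : z3E = ENNReal.ofReal (1/((0:ℝ)+1)^3) + ∑' n : ℕ, ENNReal.ofReal (1/(((n+1:ℕ):ℝ)+1)^3) := by
    rw [z3E, hz3]; norm_num
  rw [this, Sig2E]
  have h0 : ENNReal.ofReal (Hr (0+1)/(((0:ℕ):ℝ)+1)^2) = ENNReal.ofReal (1/((0:ℝ)+1)^3) := by
    norm_num [Hr]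
  rw [h0]
  ring

lemma eulerE : ∑' p : ℕ×ℕ, gE p = 2 * z3E := by
  have h1 : ∑' p : ℕ×ℕ, gE p = Sig2E + z3E := by rw [SgE_eq, Sig1_eq]
  have h2 : ∑' p : ℕ×ℕ, gE p = 2 * Sig2E := by
    calc ∑' p : ℕ×ℕ, gE p = ∑' p : ℕ×ℕ, (uE p.1 p.2 + uE p.2 p.1) := by
          apply tsum_congr; intro p; rw [← gE_split p.1 p.2]
      _ = (∑' p : ℕ×ℕ, uE p.1 p.2) + ∑' p : ℕ×ℕ, uE p.2 p.1 := ENNReal.tsum_add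
      _ = (∑' p : ℕ×ℕ, uE p.1 p.2) + ∑' p : ℕ×ℕ, uE p.1 p.2 := by rw [SuE_swap]
      _ = 2 * ∑' p : ℕ×ℕ, uE p.1 p.2 := (two_mul _).symm
      _ = 2 * Sig2E := by rw [SuE_eq, Sig2E]
  have h3 : Sig2E + z3E = Sig2E + Sig2E := by
    rw [← h1, h2, two_mul]
  have hne : Sig2E ≠ ⊤ := by rw [Sig2E, ← SuE_eq]; exact SuE_ne_top
  have : z3E = Sig2E := (ENNReal.add_right_inj hne).1 h3
  rw [h2, this]




lemma two_mul_tsum_sorted {α : Type*} [LinearOrder α] (w : α × α → ℝ≥0∞)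
    (hsym : ∀ a b, w (a, b) = w (b, a)) :
    2 * ∑' x : {p : α × α // p.1 ≤ p.2}, w x.1
      = (∑' y : α × α, w y) + ∑' a : α, w (a, a) := by
  classical
  set sle : Set (α × α) := {p | p.1 ≤ p.2} with hsle
  set slt : Set (α × α) := {p | p.1 < p.2} with hslt
  set seq : Set (α × α) := {p | p.1 = p.2} with hseq
  set sgt : Set (α × α) := {p | p.2 < p.1} with hsgt
  have hT : ∑' x : {p : α × α // p.1 ≤ p.2}, w x.1 = ∑' y, sle.indicator w y :=
    tsum_subtype sle w
  have hsplit_le : ∀ y, sle.indicator w y = slt.indicator w y + seq.indicator w y := by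
    intro y
    simp only [Set.indicator_apply, hsle, hslt, hseq, Set.mem_setOf_eq]
    rcases lt_trichotomy y.1 y.2 with h | h | h
    · rw [if_pos h.le, if_pos h, if_neg h.ne, add_zero]
    · rw [if_pos h.le, if_neg (by simp [h]), if_pos h, zero_add]
    · rw [if_neg (not_le.2 h), if_neg (asymm h), if_neg (ne_of_gt h), add_zero]
  have hsplit_all : ∀ y : α × α, w y
      = slt.indicator w y + seq.indicator w y + sgt.indicator w y := by
    intro y
    simp only [Set.indicator_apply, hslt, hseq, hsgt, Set.mem_setOf_eq]
    rcases lt_trichotomy y.1 y.2 with h | h | h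
    · rw [if_pos h, if_neg h.ne, if_neg (asymm h), add_zero, add_zero]
    · rw [if_neg (by simp [h]), if_pos h, if_neg (by simp [h]), zero_add, add_zero]
    · rw [if_neg (asymm h), if_neg (ne_of_gt h), if_pos h, zero_add, zero_add]
  have hgtlt : ∑' y, sgt.indicator w y = ∑' y, slt.indicator w y := by
    rw [← tsum_subtype sgt w, ← tsum_subtype slt w]
    let e : slt ≃ sgt :=
      ⟨fun x => ⟨x.1.swap, x.2⟩, fun x => ⟨x.1.swap, x.2⟩,
        fun x => by simp, fun x => by simp⟩
    rw [← e.tsum_eq (fun x : sgt => w x.1)]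
    apply tsum_congr
    rintro ⟨⟨a, b⟩, hx⟩
    exact hsym b a
  have heq : ∑' y, seq.indicator w y = ∑' a : α, w (a, a) := by
    rw [← tsum_subtype seq w]
    let e : α ≃ seq := ⟨fun a => ⟨(a, a), rfl⟩, fun x => x.1.1,
      fun a => rfl, fun x => by
        have := x.2
        simp only [hseq, Set.mem_setOf_eq] at this
        exact Subtype.ext (Prod.ext rfl this)⟩
    rw [← e.tsum_eq (fun x : seq => w x.1)]
    exact tsum_congr fun a => rfl
  calc 2 * ∑' x : {p : α × α // p.1 ≤ p.2}, w x.1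
      = (∑' y, sle.indicator w y) + ∑' y, sle.indicator w y := by rw [hT, two_mul]
    _ = ((∑' y, slt.indicator w y) + ∑' y, seq.indicator w y)
        + ((∑' y, slt.indicator w y) + ∑' y, seq.indicator w y) := by
        rw [tsum_congr hsplit_le, ENNReal.tsum_add]
    _ = ((∑' y, slt.indicator w y) + (∑' y, seq.indicator w y) + ∑' y, sgt.indicator w y)
        + ∑' y, seq.indicator w y := by rw [hgtlt]; ring
    _ = (∑' y : α × α, w y) + ∑' a : α, w (a, a) := by
        rw [tsum_congr hsplit_all, ENNReal.tsum_add, ENNReal.tsum_add, heq]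




variable {F : Type*} [Field F] [Fintype F]

-- finiteness of monic polys of fixed degree
noncomputable instance instFinMonic (m : ℕ) : Finite { p : F[X] // p.Monic ∧ p.natDegree = m } := by
  have e := (monicEquivDegreeLT (R := F) m).trans (degreeLTEquiv F m).toEquiv
  exact Finite.of_equiv _ e.symm

instance instFinIrr (m : ℕ) :
    Finite { p : F[X] // p.Monic ∧ Irreducible p ∧ p.natDegree = m } := by
  have : Function.Injective
      (fun P : { p : F[X] // p.Monic ∧ Irreducible p ∧ p.natDegree = m } =>
        (⟨P.1, P.2.1, P.2.2.2⟩ : { p : F[X] // p.Monic ∧ p.natDegree = m })) := by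
    intro a b h
    simpa [Subtype.ext_iff] using h
  exact Finite.of_injective _ this

-- each monic irreducible of degree m divides X^(q^m) - X
lemma dvd_X_pow_card (p : F[X]) (hm : p.Monic) (hi : Irreducible p) :
    p ∣ X ^ ((Fintype.card F) ^ p.natDegree) - X := by
  haveI : Fact (Irreducible p) := ⟨hi⟩
  set K := AdjoinRoot p
  have hp0 : p ≠ 0 := hm.ne_zero
  haveI : Module.Finite F K := (AdjoinRoot.powerBasis hp0).finite
  haveI : Finite K := Module.finite_of_finite F
  haveI : Fintype K := Fintype.ofFinite K
  have hcard : Fintype.card K = (Fintype.card F) ^ p.natDegree := by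
    rw [Module.card_fintype (AdjoinRoot.powerBasis hp0).basis, Fintype.card_fin,
      AdjoinRoot.powerBasis_dim]
  have hmin : minpoly F (AdjoinRoot.root p) = p := by
    rw [AdjoinRoot.minpoly_root hp0, hm.leadingCoeff, inv_one, map_one, mul_one]
  have hroot : (Polynomial.aeval (AdjoinRoot.root p)) (X ^ ((Fintype.card F) ^ p.natDegree) - X : F[X]) = 0 := by
    rw [map_sub, map_pow, aeval_X, ← hcard, FiniteField.pow_card, sub_self]
  have := minpoly.dvd F (AdjoinRoot.root p) hroot
  rwa [hmin] at this

lemma mul_card_irr_le (m : ℕ) :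
    m * Nat.card { p : F[X] // p.Monic ∧ Irreducible p ∧ p.natDegree = m } ≤ (Fintype.card F) ^ m := by
  rcases Nat.eq_zero_or_pos m with rfl | hm
  · simp
  classical
  set S := { p : F[X] // p.Monic ∧ Irreducible p ∧ p.natDegree = m }
  haveI : Fintype S := Fintype.ofFinite S
  set g : F[X] := ∏ P : S, P.1 with hg
  have hq2 : 2 ≤ Fintype.card F := Fintype.one_lt_card
  have hN2 : 2 ≤ (Fintype.card F) ^ m := le_trans hq2 (Nat.le_self_pow (by omega) _)
  have htne : (X ^ ((Fintype.card F) ^ m) - X : F[X]) ≠ 0 := by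
    intro h
    have h1 : (X ^ ((Fintype.card F) ^ m) - X : F[X]).natDegree = (Fintype.card F) ^ m := by
      rw [natDegree_sub_eq_left_of_natDegree_lt]
      · exact natDegree_X_pow _
      · rw [natDegree_X_pow, natDegree_X]; omega
    rw [h, natDegree_zero] at h1
    omega
  have hdvd : g ∣ X ^ ((Fintype.card F) ^ m) - X := by
    apply Finset.prod_dvd_of_coprime
    · intro P hP Q hQ hne
      have hPQ : P.1 ≠ Q.1 := fun h => hne (Subtype.ext h)
      apply (P.2.2.1.coprime_iff_not_dvd).2
      intro hdv
      exact hPQ (eq_of_monic_of_associated P.2.1 Q.2.1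
        (P.2.2.1.associated_of_dvd Q.2.2.1 hdv))
    · intro P _
      have := dvd_X_pow_card P.1 P.2.1 P.2.2.1
      rwa [P.2.2.2] at this
  have hdeg : g.natDegree = m * Fintype.card S := by
    rw [hg, natDegree_prod _ _ (fun P _ => P.2.2.1.ne_zero)]
    rw [Finset.sum_congr rfl (fun P _ => P.2.2.2)]
    simp [Finset.card_univ, mul_comm]
  have := natDegree_le_of_dvd hdvd htne
  rw [hdeg, natDegree_sub_eq_left_of_natDegree_lt, natDegree_X_pow] at this
  · rwa [Nat.card_eq_fintype_card]
  · rw [natDegree_X_pow, natDegree_X]; omega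





variable {F : Type*} [Field F] [Fintype F]


noncomputable def aF (F : Type*) [Field F] [Fintype F] (m : ℕ) : ℕ :=
  Nat.card { p : F[X] // p.Monic ∧ Irreducible p ∧ p.natDegree = m }

def Irr (F : Type*) [Field F] := { P : F[X] // P.Monic ∧ Irreducible P }

def fiberEquiv (m : ℕ) :
    {P : Irr F // P.1.natDegree = m} ≃ { p : F[X] // p.Monic ∧ Irreducible p ∧ p.natDegree = m } :=
  ⟨fun P => ⟨P.1.1, P.1.2.1, P.1.2.2, P.2⟩, fun p => ⟨⟨p.1, p.2.1, p.2.2.1⟩, p.2.2.2⟩,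
    fun _ => rfl, fun _ => rfl⟩

instance (m : ℕ) : Finite {P : Irr F // P.1.natDegree = m} := Finite.of_equiv _ (fiberEquiv m).symm

lemma card_fiber (m : ℕ) : Nat.card {P : Irr F // P.1.natDegree = m} = aF F m :=
  Nat.card_congr (fiberEquiv m)

lemma tsum_irr (v : ℕ → ℝ≥0∞) :
    ∑' P : Irr F, v P.1.natDegree = ∑' m : ℕ, (aF F m : ℝ≥0∞) * v m := by
  have h1 := ((Equiv.sigmaFiberEquiv (fun P : Irr F => P.1.natDegree)).tsum_eq
    (fun P : Irr F => v P.1.natDegree)).symm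
  rw [h1]
  have h2 : ∀ x : Σ m : ℕ, {P : Irr F // P.1.natDegree = m},
      v ((Equiv.sigmaFiberEquiv (fun P : Irr F => P.1.natDegree)) x).1.natDegree = v x.1 := by
    rintro ⟨m, P, hP⟩
    simp [Equiv.sigmaFiberEquiv, hP]
  rw [tsum_congr h2, ENNReal.tsum_sigma (fun m _ => v m)]
  apply tsum_congr
  intro m
  haveI : Fintype {P : Irr F // P.1.natDegree = m} := Fintype.ofFinite _
  rw [tsum_fintype, Finset.sum_const, Finset.card_univ, nsmul_eq_mul,
    ← Nat.card_eq_fintype_card, card_fiber]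

lemma aF_zero : aF F 0 = 0 := by
  rw [aF, Nat.card_eq_zero]
  left
  constructor
  rintro ⟨p, hm, hi, hd⟩
  exact not_irreducible_one (hm.natDegree_eq_zero.1 hd ▸ hi)

lemma irr_natDegree_pos (p : F[X]) (hm : p.Monic) (hi : Irreducible p) : 0 < p.natDegree := by
  rcases Nat.eq_zero_or_pos p.natDegree with h | h
  · exact absurd (hm.natDegree_eq_zero.1 h ▸ hi) not_irreducible_one
  · exact h

lemma exists_two_factors (f : F[X]) (hm : f.Monic) (h2 : bigOmega f = 2) :
    ∃ P Q : F[X], P.Monic ∧ Irreducible P ∧ Q.Monic ∧ Irreducible Q ∧ f = P * Q := by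
  classical
  have hf0 : f ≠ 0 := hm.ne_zero
  have hcard : Multiset.card (UniqueFactorizationMonoid.normalizedFactors f) = 2 := by
    rw [UniqueFactorizationMonoid.normalizedFactors, Multiset.card_map]
    exact h2
  obtain ⟨a, b, hab⟩ := Multiset.card_eq_two.1 hcard
  have hmem : ∀ x ∈ UniqueFactorizationMonoid.normalizedFactors f, x.Monic ∧ Irreducible x := by
    intro x hx
    have hirr := UniqueFactorizationMonoid.irreducible_of_normalized_factor x hx
    have hnorm := UniqueFactorizationMonoid.normalize_normalized_factor x hx
    have hx0 : x ≠ 0 := hirr.ne_zero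
    have := monic_normalize (R := F) hx0
    rw [hnorm] at this
    exact ⟨this, hirr⟩
  have ha := hmem a (by rw [hab]; simp)
  have hb := hmem b (by rw [hab]; simp)
  have hassoc := UniqueFactorizationMonoid.prod_normalizedFactors hf0
  rw [hab] at hassoc
  simp only [Multiset.insert_eq_cons, Multiset.prod_cons, Multiset.prod_singleton] at hassoc
  exact ⟨a, b, ha.1, ha.2, hb.1, hb.2,
    (eq_of_monic_of_associated (ha.1.mul hb.1) hm hassoc).symm⟩

lemma inv_le_helper (A M N : ℕ) (h : M * A ≤ N) :
    (A : ℝ≥0∞) * ((N : ℕ) : ℝ≥0∞)⁻¹ ≤ ((M : ℕ) : ℝ≥0∞)⁻¹ := by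
  rcases Nat.eq_zero_or_pos M with rfl | hM
  · simp
  rcases Nat.eq_zero_or_pos A with rfl | hA
  · simp
  have hN : 0 < N := lt_of_lt_of_le (Nat.mul_pos hM hA) h
  rw [ENNReal.le_inv_iff_mul_le]
  calc (A : ℝ≥0∞) * ((N : ℕ) : ℝ≥0∞)⁻¹ * M = ((A * M : ℕ) : ℝ≥0∞) * ((N : ℕ) : ℝ≥0∞)⁻¹ := by
        push_cast; ring
    _ ≤ ((N : ℕ) : ℝ≥0∞) * ((N : ℕ) : ℝ≥0∞)⁻¹ := by
        apply mul_le_mul_left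
        have hAM : (A * M : ℕ) ≤ N := by rw [Nat.mul_comm]; exact h
        exact_mod_cast hAM
    _ = 1 := ENNReal.mul_inv_cancel (by exact_mod_cast hN.ne') (ENNReal.natCast_ne_top N)


end Stmt18

open Stmt18


theorem stmt_18 (q : ℕ) (hq : IsPrimePow q)
    (F : Type*) [Field F] [Fintype F] (hF : Fintype.card F = q) :
    (∑' f : {f : F[X] // f.Monic ∧ bigOmega f = 2},
        1 / ((q : ℝ) ^ ((f : F[X]).natDegree) * ((f : F[X]).natDegree))) ≤
      (∑' n : ℕ, 1 / ((n : ℝ) + 1) ^ 3) + (1 / 2) * dilog (1 / (q : ℝ)) := by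
  classical
  have hq2 : 2 ≤ q := hq.two_le
  have hq0 : (0:ℝ) < q := by exact_mod_cast Nat.lt_of_lt_of_le Nat.zero_lt_two hq2
  set t : ℕ → ℝ≥0∞ := fun n => ((q ^ n * n : ℕ) : ℝ≥0∞)⁻¹ with ht
  set z3r : ℝ := ∑' n : ℕ, 1 / ((n : ℝ) + 1) ^ 3 with hz3r
  set Dr : ℝ := ∑' k : ℕ, 1 / ((2 * (k+1)^2 * q^(k+1) : ℕ) : ℝ) with hDr
  -- summability facts
  have hz3sum : Summable (fun n : ℕ => 1 / ((n : ℝ) + 1) ^ 3) := by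
    have h0 : Summable (fun n : ℕ => 1/((n:ℝ))^3) := Real.summable_one_div_nat_pow.2 (by norm_num)
    have h1 := (summable_nat_add_iff 1).2 h0
    apply h1.congr
    intro n
    push_cast
    ring_nf
  have hDsum : Summable (fun k : ℕ => 1 / ((2 * (k+1)^2 * q^(k+1) : ℕ) : ℝ)) := by
    have hgeo : Summable (fun k : ℕ => (1/2:ℝ)^(k+1)) := by
      have := (summable_geometric_of_lt_one (by norm_num : (0:ℝ) ≤ 1/2) (by norm_num)).mul_right (1/2)
      apply this.congr
      intro k
      rw [pow_succ]
    apply Summable.of_nonneg_of_le (fun k => by positivity) (fun k => ?_) hgeo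
    have hbig : (2:ℕ)^(k+1) ≤ 2 * (k+1)^2 * q^(k+1) := by
      calc (2:ℕ)^(k+1) ≤ q^(k+1) := Nat.pow_le_pow_left hq2 _
        _ ≤ 2 * (k+1)^2 * q^(k+1) := Nat.le_mul_of_pos_left _ (by positivity)
    rw [one_div_pow]
    apply one_div_le_one_div_of_le (by positivity)
    exact_mod_cast hbig
  -- the subtype and degree positivity
  have hdegpos : ∀ f : {f : F[X] // f.Monic ∧ bigOmega f = 2}, 0 < (f.1).natDegree := by
    rintro ⟨f, hm, h2⟩
    obtain ⟨P, Q, hPm, hPi, hQm, hQi, hf⟩ := exists_two_factors f hm h2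
    simp only
    rw [hf, natDegree_mul hPi.ne_zero hQi.ne_zero]
    have h1 := irr_natDegree_pos P hPm hPi
    omega
  -- t facts
  have htne : ∀ n : ℕ, 0 < n → t n ≠ ⊤ := by
    intro n hn
    rw [ht]
    simp only
    rw [Ne, ENNReal.inv_eq_top]
    have hpos : (0:ℕ) < q^n*n := by positivity
    exact_mod_cast hpos.ne'
  have httoReal : ∀ n : ℕ, (t n).toReal = 1 / ((q:ℝ)^n * (n:ℝ)) := by
    intro n
    rw [ht]
    simp only
    rw [ENNReal.toReal_inv, ENNReal.toReal_natCast, one_div]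
    congr 1
    push_cast
    ring
  -- linear orders
  letI : LinearOrder F[X] := IsWellOrder.linearOrder WellOrderingRel
  letI : LinearOrder (Irr F) := LinearOrder.lift' (fun P : Irr F => P.1)
    (fun a b h => Subtype.ext h)
  set w : Irr F × Irr F → ℝ≥0∞ :=
    fun x => t (x.1.1.natDegree + x.2.1.natDegree) with hw
  -- injection into sorted pairs
  have hj : ∀ f : {f : F[X] // f.Monic ∧ bigOmega f = 2},
      ∃ x : {p : Irr F × Irr F // p.1 ≤ p.2}, (x.1.1.1 * x.1.2.1 : F[X]) = f.1 := by
    rintro ⟨f, hm, h2⟩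
    obtain ⟨P, Q, hPm, hPi, hQm, hQi, hf⟩ := exists_two_factors f hm h2
    rcases le_total (⟨P, hPm, hPi⟩ : Irr F) ⟨Q, hQm, hQi⟩ with h | h
    · exact ⟨⟨(⟨P, hPm, hPi⟩, ⟨Q, hQm, hQi⟩), h⟩, hf.symm⟩
    · exact ⟨⟨(⟨Q, hQm, hQi⟩, ⟨P, hPm, hPi⟩), h⟩, by rw [mul_comm]; exact hf.symm⟩
  choose j hjspec using hj
  have hjinj : Function.Injective j := by
    intro f g hfg
    apply Subtype.ext
    rw [← hjspec f, ← hjspec g, hfg]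
  have hwj : ∀ f, w (j f).1 = t f.1.natDegree := by
    intro f
    rw [hw]
    simp only
    congr 1
    rw [← hjspec f, natDegree_mul ((j f).1.1.2.2.ne_zero) ((j f).1.2.2.2.ne_zero)]
  -- main ennreal chain
  set E : ℝ≥0∞ := ∑' f : {f : F[X] // f.Monic ∧ bigOmega f = 2}, t f.1.natDegree with hE
  have hstep1 : E ≤ ∑' x : {p : Irr F × Irr F // p.1 ≤ p.2}, w x.1 := by
    rw [hE, ← tsum_congr hwj]
    exact ENNReal.tsum_comp_le_tsum_of_injective hjinj
      (fun x : {p : Irr F × Irr F // p.1 ≤ p.2} => w x.1)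
  have hsym2 := two_mul_tsum_sorted w (fun a b => by
    rw [hw]; simp only; rw [add_comm])
  -- counting bound per degree
  have hbound : ∀ m : ℕ, (m+1) * aF F (m+1) ≤ q^(m+1) := by
    intro m
    have := mul_card_irr_le (F := F) (m+1)
    rwa [hF] at this
  -- full double sum
  have hfull : (∑' y : Irr F × Irr F, w y) ≤ 2 * z3E := by
    have h2 : ∑' y : Irr F × Irr F, w y
        = ∑' m : ℕ, (aF F m : ℝ≥0∞) * ∑' k : ℕ, (aF F k : ℝ≥0∞) * t (m + k) := by
      rw [hw]
      rw [ENNReal.tsum_prod (f := fun P Q : Irr F => t (P.1.natDegree + Q.1.natDegree))]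
      have hin : ∀ P : Irr F, ∑' Q : Irr F, t (P.1.natDegree + Q.1.natDegree)
          = ∑' k, (aF F k : ℝ≥0∞) * t (P.1.natDegree + k) :=
        fun P => tsum_irr (v := fun k => t (P.1.natDegree + k))
      rw [tsum_congr hin]
      exact tsum_irr (v := fun m => ∑' k, (aF F k : ℝ≥0∞) * t (m + k))
    have hinner : ∀ m' : ℕ, ∑' k, (aF F k : ℝ≥0∞) * t (m' + k)
        = ∑' k, (aF F (k+1) : ℝ≥0∞) * t (m' + (k+1)) := by
      intro m'
      rw [tsum_eq_zero_add' ENNReal.summable]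
      simp [aF_zero]
    have houter : ∑' m : ℕ, (aF F m : ℝ≥0∞) * ∑' k : ℕ, (aF F k : ℝ≥0∞) * t (m + k)
        = ∑' m : ℕ, (aF F (m+1) : ℝ≥0∞) * ∑' k : ℕ, (aF F (k+1) : ℝ≥0∞) * t ((m+1) + (k+1)) := by
      rw [tsum_eq_zero_add' ENNReal.summable]
      simp only [aF_zero, Nat.cast_zero, zero_mul, zero_add]
      exact tsum_congr fun m => by rw [hinner (m+1)]
    have hterm : ∀ m k : ℕ, (aF F (m+1) : ℝ≥0∞) * ((aF F (k+1) : ℝ≥0∞) * t ((m+1) + (k+1)))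
        ≤ gE (m, k) := by
      intro m k
      have hnat : ((m+1)*(k+1)*(m+k+2)) * (aF F (m+1) * aF F (k+1)) ≤ q^((m+1)+(k+1)) * ((m+1)+(k+1)) := by
        calc ((m+1)*(k+1)*(m+k+2)) * (aF F (m+1) * aF F (k+1))
            = ((m+1) * aF F (m+1)) * ((k+1) * aF F (k+1)) * (m+k+2) := by ring
          _ ≤ q^(m+1) * q^(k+1) * (m+k+2) :=
              Nat.mul_le_mul (Nat.mul_le_mul (hbound m) (hbound k)) le_rfl
          _ = q^((m+1)+(k+1)) * ((m+1)+(k+1)) := by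
              rw [← pow_add]
              congr 1
              omega
      calc (aF F (m+1) : ℝ≥0∞) * ((aF F (k+1) : ℝ≥0∞) * t ((m+1) + (k+1)))
          = ((aF F (m+1) * aF F (k+1) : ℕ) : ℝ≥0∞) * t ((m+1) + (k+1)) := by
            push_cast; ring
        _ ≤ (((m+1)*(k+1)*(m+k+2) : ℕ) : ℝ≥0∞)⁻¹ := by
            rw [ht]
            exact inv_le_helper _ _ _ hnat
        _ = gE (m, k) := rfl
    calc (∑' y : Irr F × Irr F, w y)
        = ∑' m : ℕ, (aF F (m+1) : ℝ≥0∞) * ∑' k : ℕ, (aF F (k+1) : ℝ≥0∞) * t ((m+1) + (k+1)) := by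
          rw [h2, houter]
      _ = ∑' (m : ℕ) (k : ℕ), (aF F (m+1) : ℝ≥0∞) * ((aF F (k+1) : ℝ≥0∞) * t ((m+1) + (k+1))) := by
          exact tsum_congr fun m => ENNReal.tsum_mul_left.symm
      _ ≤ ∑' (m : ℕ) (k : ℕ), gE (m, k) :=
          ENNReal.tsum_le_tsum fun m => ENNReal.tsum_le_tsum fun k => hterm m k
      _ = ∑' p : ℕ×ℕ, gE p := (ENNReal.tsum_prod (f := fun m k => gE (m, k))).symm
      _ = 2 * z3E := eulerE
  -- diagonal sum
  have hdiag : (∑' a : Irr F, w (a, a)) ≤ ENNReal.ofReal Dr := by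
    have h1 : (∑' a : Irr F, w (a, a)) = ∑' m : ℕ, (aF F m : ℝ≥0∞) * t (m + m) := by
      rw [hw]
      exact tsum_irr (v := fun m => t (m + m))
    have h2 : ∑' m : ℕ, (aF F m : ℝ≥0∞) * t (m + m)
        = ∑' k : ℕ, (aF F (k+1) : ℝ≥0∞) * t ((k+1) + (k+1)) := by
      rw [tsum_eq_zero_add' ENNReal.summable]
      simp [aF_zero]
    have hterm : ∀ k : ℕ, (aF F (k+1) : ℝ≥0∞) * t ((k+1) + (k+1))
        ≤ ((2*(k+1)^2*q^(k+1) : ℕ) : ℝ≥0∞)⁻¹ := by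
      intro k
      have hnat : (2*(k+1)^2*q^(k+1)) * aF F (k+1) ≤ q^((k+1)+(k+1)) * ((k+1)+(k+1)) := by
        calc (2*(k+1)^2*q^(k+1)) * aF F (k+1)
            = (2*(k+1)) * q^(k+1) * ((k+1) * aF F (k+1)) := by ring
          _ ≤ (2*(k+1)) * q^(k+1) * q^(k+1) :=
              Nat.mul_le_mul le_rfl (hbound k)
          _ = q^((k+1)+(k+1)) * ((k+1)+(k+1)) := by
              rw [pow_add]
              ring
      rw [ht]
      exact inv_le_helper _ _ _ hnat
    have h3 : ∑' k : ℕ, ((2*(k+1)^2*q^(k+1) : ℕ) : ℝ≥0∞)⁻¹ = ENNReal.ofReal Dr := by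
      rw [tsum_congr (fun k => ofRinv _ (by positivity)), hDr,
        ← ENNReal.ofReal_tsum_of_nonneg (fun k => by positivity) hDsum]
    rw [h1, h2, ← h3]
    exact ENNReal.tsum_le_tsum hterm
  -- z3E = ofReal z3r
  have hz3E : z3E = ENNReal.ofReal z3r := by
    rw [z3E, hz3r, ← ENNReal.ofReal_tsum_of_nonneg (fun n => by positivity) hz3sum]
  -- combine
  have hz3nonneg : 0 ≤ z3r := by
    rw [hz3r]; exact tsum_nonneg (fun n => by positivity)
  have hDrnonneg : 0 ≤ Dr := by
    rw [hDr]; exact tsum_nonneg (fun k => by positivity)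
  have hmain : E ≤ ENNReal.ofReal (z3r + Dr/2) := by
    have h2T : 2 * (∑' x : {p : Irr F × Irr F // p.1 ≤ p.2}, w x.1)
        ≤ 2 * ENNReal.ofReal (z3r + Dr/2) := by
      rw [hsym2]
      calc (∑' y : Irr F × Irr F, w y) + ∑' a : Irr F, w (a, a)
          ≤ 2 * z3E + ENNReal.ofReal Dr := add_le_add hfull hdiag
        _ = 2 * ENNReal.ofReal (z3r + Dr/2) := by
            rw [hz3E, ← ENNReal.ofReal_ofNat 2, ← ENNReal.ofReal_mul (by norm_num),
              ← ENNReal.ofReal_add (by positivity) hDrnonneg,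
              ← ENNReal.ofReal_mul (by norm_num)]
            congr 1
            ring
    have := (ENNReal.mul_le_mul_iff_right (a := 2) (by norm_num) (by norm_num)).1 h2T
    exact le_trans hstep1 this
  -- back to reals
  have hLHS : (∑' f : {f : F[X] // f.Monic ∧ bigOmega f = 2},
      1 / ((q : ℝ) ^ ((f : F[X]).natDegree) * ((f : F[X]).natDegree))) = E.toReal := by
    rw [hE, ENNReal.tsum_toReal_eq (fun f => htne _ (hdegpos f))]
    exact tsum_congr fun f => by rw [httoReal _]
  rw [hLHS]
  have hfinal : E.toReal ≤ z3r + Dr/2 := by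
    calc E.toReal ≤ (ENNReal.ofReal (z3r + Dr/2)).toReal :=
          ENNReal.toReal_mono ENNReal.ofReal_ne_top hmain
      _ = z3r + Dr/2 := ENNReal.toReal_ofReal (by positivity)
  -- relate Dr to dilog
  have hdilog_eq : Dr = 2⁻¹ * dilog (1/(q:ℝ)) := by
    rw [hDr, dilog]
    rw [← tsum_mul_left]
    apply tsum_congr
    intro k
    have hqk : (0:ℝ) < (q:ℝ)^(k+1) := by positivity
    push_cast
    rw [div_pow, one_pow]
    rw [eq_comm]
    field_simp
  have hdilognn : 0 ≤ dilog (1/(q:ℝ)) := tsum_nonneg fun k => by positivity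
  linarith [hfinal]
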